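/- Let G be a finite simple connected graph, let W ⊆ V be a set of vertices inducing a connected subgraph of G, and let u ∈ W. Then N[W] is a u-transitive set. In particular, for every integer ℓ ≥ 0, the ball N^ℓ[u] = {v ∈ V : d(u,v) ≤ ℓ} is u-transitive. -/

import Mathlib

variable {V : Type*}

/-- The closed neighbourhood `N[v]` of a vertex. -/
def closedNbhd (G : SimpleGraph V) (v : V) : Set V := insert v (G.neighborSet v)

/-- `N[S] = ⋃_{v ∈ S} N[v]`. -/
def closedNbhdSet (G : SimpleGraph V) (S : Set V) : Set V := ⋃ v ∈ S, closedNbhd G v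

/-- A vertex `v` is an extremity if the subgraph induced on `V \ N[v]` is
connected (possibly empty). -/
def IsExtremity (G : SimpleGraph V) (v : V) : Prop :=
  (G.induce (closedNbhd G v)ᶜ).Preconnected

/-- `M` is a module: every vertex outside `M` is adjacent to all of `M` or none of `M`. -/
def IsModuleSet (G : SimpleGraph V) (M : Set V) : Prop :=
  ∀ z ∉ M, ∀ x ∈ M, ∀ y ∈ M, (G.Adj z x ↔ G.Adj z y)

/-- A graph is prime if its only modules are `∅`, `V` and the singletons. -/
def IsPrimeGraph (G : SimpleGraph V) : Prop :=
  ∀ M : Set V, IsModuleSet G M → M = ∅ ∨ M = Set.univ ∨ ∃ v, M = {v}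

/-- Eccentricity of a vertex in a finite graph. -/
noncomputable def ecc [Fintype V] (G : SimpleGraph V) (u : V) : ℕ :=
  Finset.univ.sup (G.dist u)

/-- Diameter of a finite graph. -/
noncomputable def gdiam [Fintype V] (G : SimpleGraph V) : ℕ :=
  Finset.univ.sup fun u => ecc G u

/-- `u ⊥_w v`: vertices `u` and `v` lie in different connected components of the
subgraph induced on `V \ N[w]`. -/
def Perp (G : SimpleGraph V) (w u v : V) : Prop :=
  u ∉ closedNbhd G w ∧ v ∉ closedNbhd G w ∧
    ¬ ∃ p : G.Walk u v, ∀ z ∈ p.support, z ∉ closedNbhd G w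

/-- `S` is `u`-transitive: for every `x ∈ S` and vertex `y` distinct from and
nonadjacent to `x`, `x ⊥_y u` implies `y ∈ S`. -/
def UTransitive (G : SimpleGraph V) (u : V) (S : Set V) : Prop :=
  ∀ x ∈ S, ∀ y : V, y ≠ x → ¬ G.Adj x y → Perp G y x u → y ∈ S

/-- `S` is a dominating set: every vertex lies in `N[S]`. -/
def IsDominatingSet (G : SimpleGraph V) (S : Set V) : Prop :=
  ∀ v : V, ∃ s ∈ S, v ∈ closedNbhd G s

/-- `D` is a dominating target: every superset of `D` inducing a connected
subgraph is a dominating set. -/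
def IsDomTarget (G : SimpleGraph V) (D : Set V) : Prop :=
  ∀ S : Set V, D ⊆ S → (G.induce S).Connected → IsDominatingSet G S

/-- An asteroidal set: an independent set `A` such that for every `a ∈ A`, all
vertices of `A \ {a}` lie in a single connected component of the subgraph
induced on `V \ N[a]`. -/
def IsAsteroidalSet (G : SimpleGraph V) (A : Set V) : Prop :=
  (A.Pairwise fun x y => ¬ G.Adj x y) ∧
  ∀ a ∈ A, ∀ b ∈ A, ∀ c ∈ A, b ≠ a → c ≠ a →
    ∃ p : G.Walk b c, ∀ z ∈ p.support, z ∉ closedNbhd G a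

theorem stmt_11 [Fintype V] (G : SimpleGraph V) (hG : G.Connected)
    (W : Set V) (hW : (G.induce W).Connected) (u : V) (hu : u ∈ W) :
    UTransitive G u (closedNbhdSet G W) ∧
    ∀ ℓ : ℕ, UTransitive G u {v : V | G.dist u v ≤ ℓ} := by
  classical
  have nbhd_symm : ∀ a b : V, a ∈ closedNbhd G b ↔ b ∈ closedNbhd G a := by
    intro a b
    simp only [closedNbhd, Set.mem_insert_iff, SimpleGraph.mem_neighborSet]
    rw [eq_comm, G.adj_comm]
  constructor
  · -- N[W] is u-transitive
    intro x hx y hyx hadj hperp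
    by_contra hyW
    obtain ⟨hxny, huny, hnowalk⟩ := hperp
    -- x ∈ N[w₀] for some w₀ ∈ W
    simp only [closedNbhdSet, Set.mem_iUnion] at hx
    obtain ⟨w₀, hw₀W, hxw₀⟩ := hx
    -- W avoids N[y]
    have hWavoid : ∀ w ∈ W, w ∉ closedNbhd G y := by
      intro w hwW hwy
      apply hyW
      simp only [closedNbhdSet, Set.mem_iUnion]
      exact ⟨w, hwW, (nbhd_symm y w).mpr hwy⟩
    -- walk from w₀ to u inside W
    obtain ⟨q⟩ := hW ⟨w₀, hw₀W⟩ ⟨u, hu⟩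
    let q' := q.map (SimpleGraph.Embedding.induce W).toHom
    have hq'supp : ∀ z ∈ q'.support, z ∈ W := by
      intro z hz
      simp only [q', SimpleGraph.Walk.support_map, List.mem_map] at hz
      obtain ⟨⟨a, haW⟩, _, rfl⟩ := hz
      exact haW
    -- build walk from x to u avoiding N[y]
    rcases hxw₀ with rfl | hadjx
    · exact hnowalk ⟨q', fun z hz => hWavoid z (hq'supp z hz)⟩
    · refine hnowalk ⟨SimpleGraph.Walk.cons (G.adj_symm ((G.mem_neighborSet w₀ x).mp hadjx)) q', ?_⟩
      intro z hz
      erw [SimpleGraph.Walk.support_cons, List.mem_cons] at hz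
      rcases hz with rfl | hz
      · exact hxny
      · exact hWavoid z (hq'supp z hz)
  · -- balls are u-transitive
    intro ℓ x hx y hyx hadj hperp
    obtain ⟨hxny, huny, hnowalk⟩ := hperp
    simp only [Set.mem_setOf_eq] at hx ⊢
    obtain ⟨p, hp⟩ := hG.exists_walk_length_eq_dist u x
    -- p must hit N[y]
    by_cases hhit : ∃ z ∈ p.support, z ∈ closedNbhd G y
    · obtain ⟨z, hzp, hzy⟩ := hhit
      have hzx : z ≠ x := fun h => hxny (h ▸ hzy)
      have hd1 : G.dist u z ≤ (p.takeUntil z hzp).length :=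
        SimpleGraph.dist_le _
      have hd2 : G.dist z y ≤ 1 := by
        rcases hzy with rfl | hadjz
        · rw [SimpleGraph.dist_self]; omega
        · calc G.dist z y ≤ (SimpleGraph.Walk.cons (G.adj_symm hadjz)
              SimpleGraph.Walk.nil : G.Walk z y).length := SimpleGraph.dist_le _
            _ = 1 := rfl
      have hsplit := congr_arg SimpleGraph.Walk.length (p.take_spec hzp)
      rw [SimpleGraph.Walk.length_append] at hsplit
      have hdrop : 1 ≤ (p.dropUntil z hzp).length := by
        rcases Nat.eq_zero_or_pos (p.dropUntil z hzp).length with h0 | h1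
        · exact absurd ((SimpleGraph.Walk.eq_of_length_eq_zero h0)) hzx
        · exact h1
      have : G.dist u z + 1 ≤ p.length := by omega
      calc G.dist u y ≤ G.dist u z + G.dist z y := hG.dist_triangle
        _ ≤ G.dist u z + 1 := by omega
        _ ≤ p.length := this
        _ ≤ ℓ := by rw [hp]; exact hx
    · push_neg at hhit
      exact absurd ⟨p.reverse, fun z hz =>
        hhit z (by rwa [SimpleGraph.Walk.support_reverse, List.mem_reverse] at hz)⟩
        hnowalk
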